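/- Let U be an open subset of ℂⁿ and let ℓ₁, …, ℓ_m : U → ℝ be C² (smooth) functions that are everywhere strictly positive, and set S = ℓ₁ + ⋯ + ℓ_m. If for every j, every point p ∈ U and every vector v ∈ ℂⁿ one has Λ(log ℓ_j)(p, v) ≥ 0 (i.e. each log ℓ_j is plurisubharmonic), then Λ(log S)(p, v) ≥ 0 for every p ∈ U and v ∈ ℂⁿ, i.e. the logarithm of the sum is plurisubharmonic. -/

import Mathlib

/-- The Levi quantity of a real-valued function `f` on `ℂⁿ` at a point `p` in direction `v`:
`Λ(f)(p, v) = D²f(p)(v, v) + D²f(p)(iv, iv)`, where `D²f(p)` is the second real Fréchet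
derivative of `f` at `p`. -/
noncomputable def leviQuantity {n : ℕ} (f : EuclideanSpace ℂ (Fin n) → ℝ)
    (p v : EuclideanSpace ℂ (Fin n)) : ℝ :=
  fderiv ℝ (fderiv ℝ f) p v v +
    fderiv ℝ (fderiv ℝ f) p (Complex.I • v) (Complex.I • v)

open Filter Topology

lemma hasFDerivAt_log_comp {n : ℕ} {f : EuclideanSpace ℂ (Fin n) → ℝ}
    {p : EuclideanSpace ℂ (Fin n)} (hd : DifferentiableAt ℝ f p) (hp : f p ≠ 0) :
    HasFDerivAt (fun x => Real.log (f x)) ((f p)⁻¹ • fderiv ℝ f p) p :=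
  (Real.hasDerivAt_log hp).comp_hasFDerivAt p hd.hasFDerivAt

lemma second_fderiv_log {n : ℕ} {f : EuclideanSpace ℂ (Fin n) → ℝ}
    {p : EuclideanSpace ℂ (Fin n)} (hf : ContDiffAt ℝ 2 f p)
    (hfp : ∀ᶠ x in 𝓝 p, 0 < f x) (w : EuclideanSpace ℂ (Fin n)) :
    fderiv ℝ (fderiv ℝ (fun x => Real.log (f x))) p w w
      = (f p)⁻¹ * fderiv ℝ (fderiv ℝ f) p w w
        - (f p ^ 2)⁻¹ * (fderiv ℝ f p w) ^ 2 := by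
  have hp : 0 < f p := hfp.self_of_nhds
  have hdf : DifferentiableAt ℝ f p := hf.differentiableAt two_ne_zero
  have hF : ContDiffAt ℝ 1 (fderiv ℝ f) p := hf.fderiv_right (by norm_num)
  have hdF : DifferentiableAt ℝ (fderiv ℝ f) p := hF.differentiableAt one_ne_zero
  have heq : fderiv ℝ (fun x => Real.log (f x)) =ᶠ[𝓝 p]
      fun x => (f x)⁻¹ • fderiv ℝ f x := by
    filter_upwards [hfp, hf.eventually (by norm_num)] with x hx hfx
    exact (hasFDerivAt_log_comp (hfx.differentiableAt two_ne_zero) hx.ne').fderiv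
  have hc : HasFDerivAt (fun x => (f x)⁻¹)
      ((-(f p ^ 2)⁻¹) • fderiv ℝ f p) p :=
    (hasDerivAt_inv hp.ne').comp_hasFDerivAt p hdf.hasFDerivAt
  have hsmul : HasFDerivAt (fun x => (f x)⁻¹ • fderiv ℝ f x)
      ((f p)⁻¹ • fderiv ℝ (fderiv ℝ f) p
        + ((-(f p ^ 2)⁻¹) • fderiv ℝ f p).smulRight (fderiv ℝ f p)) p :=
    hc.smul hdF.hasFDerivAt
  rw [heq.fderiv_eq, hsmul.fderiv]
  simp [ContinuousLinearMap.add_apply, ContinuousLinearMap.smul_apply,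
    ContinuousLinearMap.smulRight_apply, smul_eq_mul]
  ring

lemma levi_log_eq {n : ℕ} {f : EuclideanSpace ℂ (Fin n) → ℝ}
    {p : EuclideanSpace ℂ (Fin n)} (hf : ContDiffAt ℝ 2 f p)
    (hfp : ∀ᶠ x in 𝓝 p, 0 < f x) (v : EuclideanSpace ℂ (Fin n)) :
    leviQuantity (fun x => Real.log (f x)) p v
      = (f p)⁻¹ * leviQuantity f p v
        - (f p ^ 2)⁻¹ * ((fderiv ℝ f p v) ^ 2 + (fderiv ℝ f p (Complex.I • v)) ^ 2) := by
  unfold leviQuantity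
  rw [second_fderiv_log hf hfp v, second_fderiv_log hf hfp (Complex.I • v)]
  ring

theorem levi_log_sum_nonneg {n m : ℕ} (U : Set (EuclideanSpace ℂ (Fin n))) (hU : IsOpen U)
    (ℓ : Fin m → EuclideanSpace ℂ (Fin n) → ℝ)
    (hC2 : ∀ j, ContDiffOn ℝ 2 (ℓ j) U)
    (hpos : ∀ j, ∀ p ∈ U, 0 < ℓ j p)
    (S : EuclideanSpace ℂ (Fin n) → ℝ)
    (hS : S = fun p => ∑ j, ℓ j p)
    (hpsh : ∀ j, ∀ p ∈ U, ∀ v : EuclideanSpace ℂ (Fin n),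
      0 ≤ leviQuantity (fun x => Real.log (ℓ j x)) p v) :
    ∀ p ∈ U, ∀ v : EuclideanSpace ℂ (Fin n),
      0 ≤ leviQuantity (fun x => Real.log (S x)) p v := by
  intro p hp v
  rcases Nat.eq_zero_or_pos m with hm | hm
  · subst hm
    have h00 : (fun x => Real.log (S x)) = fun _ => (0 : ℝ) := by
      funext x; simp [hS]
    rw [h00]
    unfold leviQuantity
    have h0 : (fderiv ℝ (fun _ : EuclideanSpace ℂ (Fin n) => (0 : ℝ)))
        = fun _ => 0 := by
      funext x; exact fderiv_const_apply 0
    rw [h0]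
    have h1 : fderiv ℝ (fun _ : EuclideanSpace ℂ (Fin n) =>
        (0 : EuclideanSpace ℂ (Fin n) →L[ℝ] ℝ)) p = 0 := fderiv_const_apply 0
    rw [h1]
    simp
  -- m > 0 case
  have hmemU : U ∈ 𝓝 p := hU.mem_nhds hp
  have hCat : ∀ j, ContDiffAt ℝ 2 (ℓ j) p := fun j => (hC2 j).contDiffAt hmemU
  have hSC : ContDiffAt ℝ 2 S p := by
    rw [hS]; exact ContDiffAt.sum fun j _ => hCat j
  have hSpos : ∀ᶠ x in 𝓝 p, 0 < S x := by
    filter_upwards [hmemU] with x hx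
    rw [hS]
    exact Finset.sum_pos (fun j _ => hpos j x hx) (Finset.univ_nonempty_iff.mpr
      ⟨⟨0, hm⟩⟩)
  have hlpos : ∀ j, ∀ᶠ x in 𝓝 p, 0 < ℓ j x := fun j => by
    filter_upwards [hmemU] with x hx; exact hpos j x hx
  -- first derivative of S as a sum
  have hdiff : ∀ x ∈ U, ∀ j, DifferentiableAt ℝ (ℓ j) x := fun x hx j =>
    ((hC2 j).contDiffAt (hU.mem_nhds hx)).differentiableAt two_ne_zero
  have hfd : fderiv ℝ S =ᶠ[𝓝 p] fun x => ∑ j, fderiv ℝ (ℓ j) x := by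
    filter_upwards [hmemU] with x hx
    rw [hS]
    exact fderiv_fun_sum fun j _ => hdiff x hx j
  have hdF : ∀ j, DifferentiableAt ℝ (fderiv ℝ (ℓ j)) p := fun j =>
    ((hCat j).fderiv_right (by norm_num)).differentiableAt one_ne_zero
  have hsd : fderiv ℝ (fderiv ℝ S) p = ∑ j, fderiv ℝ (fderiv ℝ (ℓ j)) p := by
    rw [hfd.fderiv_eq]
    exact fderiv_fun_sum fun j _ => hdF j
  have hfdp : fderiv ℝ S p = ∑ j, fderiv ℝ (ℓ j) p := hfd.self_of_nhds
  -- abbreviations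
  set L : Fin m → ℝ := fun j => ℓ j p with hL
  set a : Fin m → ℝ := fun j => fderiv ℝ (ℓ j) p v with ha
  set b : Fin m → ℝ := fun j => fderiv ℝ (ℓ j) p (Complex.I • v) with hb
  set Λ : Fin m → ℝ := fun j => leviQuantity (ℓ j) p v with hΛ
  have hSp : S p = ∑ j, L j := by rw [hS]
  have hT : 0 < ∑ j, L j := by
    exact Finset.sum_pos (fun j _ => hpos j p hp) (Finset.univ_nonempty_iff.mpr ⟨⟨0, hm⟩⟩)
  have hSlevi : leviQuantity S p v = ∑ j, Λ j := by
    unfold leviQuantity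
    rw [hsd]
    simp [hΛ, leviQuantity, ContinuousLinearMap.sum_apply, Finset.sum_add_distrib]
  have hSa : fderiv ℝ S p v = ∑ j, a j := by
    rw [hfdp]; simp [ha, ContinuousLinearMap.sum_apply]
  have hSb : fderiv ℝ S p (Complex.I • v) = ∑ j, b j := by
    rw [hfdp]; simp [hb, ContinuousLinearMap.sum_apply]
  rw [levi_log_eq hSC hSpos v, hSlevi, hSa, hSb, hSp]
  -- per-j inequality from psh hypothesis
  have hkey : ∀ j, (a j ^ 2 + b j ^ 2) / L j ≤ Λ j := by
    intro j
    have h := hpsh j p hp v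
    rw [levi_log_eq (hCat j) (hlpos j) v] at h
    have hLj : 0 < L j := hpos j p hp
    have h' : ((L j) ^ 2)⁻¹ * (a j ^ 2 + b j ^ 2) ≤ (L j)⁻¹ * Λ j := by linarith
    rw [div_le_iff₀ hLj]
    calc a j ^ 2 + b j ^ 2 = L j ^ 2 * (((L j) ^ 2)⁻¹ * (a j ^ 2 + b j ^ 2)) := by
          field_simp
      _ ≤ L j ^ 2 * ((L j)⁻¹ * Λ j) := mul_le_mul_of_nonneg_left h' (by positivity)
      _ = Λ j * L j := by
          rw [sq]
          field_simp
  -- Cauchy-Schwarz (Sedrakyan)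
  have hLpos : ∀ j ∈ Finset.univ, 0 < L j := fun j _ => hpos j p hp
  have hcs1 : (∑ j, a j) ^ 2 / (∑ j, L j) ≤ ∑ j, a j ^ 2 / L j :=
    Finset.sq_sum_div_le_sum_sq_div Finset.univ a hLpos
  have hcs2 : (∑ j, b j) ^ 2 / (∑ j, L j) ≤ ∑ j, b j ^ 2 / L j :=
    Finset.sq_sum_div_le_sum_sq_div Finset.univ b hLpos
  have hsum : ((∑ j, a j) ^ 2 + (∑ j, b j) ^ 2) / (∑ j, L j) ≤ ∑ j, Λ j := by
    calc ((∑ j, a j) ^ 2 + (∑ j, b j) ^ 2) / (∑ j, L j)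
        = (∑ j, a j) ^ 2 / (∑ j, L j) + (∑ j, b j) ^ 2 / (∑ j, L j) := add_div _ _ _
      _ ≤ ∑ j, a j ^ 2 / L j + ∑ j, b j ^ 2 / L j := add_le_add hcs1 hcs2
      _ = ∑ j, (a j ^ 2 + b j ^ 2) / L j := by
          rw [← Finset.sum_add_distrib]
          exact Finset.sum_congr rfl fun j _ => (add_div _ _ _).symm
      _ ≤ ∑ j, Λ j := Finset.sum_le_sum fun j _ => hkey j
  have h2 : ((∑ j, a j) ^ 2 + (∑ j, b j) ^ 2) ≤ (∑ j, L j) * ∑ j, Λ j :=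
    ((div_le_iff₀ hT).mp hsum).trans_eq (mul_comm _ _)
  have hT2 : (0:ℝ) < (∑ j, L j) ^ 2 := by positivity
  rw [sub_nonneg]
  calc ((∑ j, L j) ^ 2)⁻¹ * ((∑ j, a j) ^ 2 + (∑ j, b j) ^ 2)
      ≤ ((∑ j, L j) ^ 2)⁻¹ * ((∑ j, L j) * ∑ j, Λ j) := by
        exact mul_le_mul_of_nonneg_left h2 (by positivity)
    _ = (∑ j, L j)⁻¹ * ∑ j, Λ j := by
        rw [sq, mul_inv]
        field_simp
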